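/- Let μ be a probability measure on ℝ^d absolutely continuous with respect to Lebesgue measure, let η be a Poisson point process on ℝ^d with intensity measure tμ for t > 0, and let Π_t be the convex hull of the points of η. For x, y ≥ 0 with x + y = 1, let η_{xt} and η̄_{yt} be independent Poisson point processes with intensity measures xtμ and ytμ respectively, and let Π_{xt} be the convex hull of the points of η_{xt}. Then the probability that all vertices of the convex hull of η_{xt} + η̄_{yt} belong to η_{xt} equals E[e^{−yt·Δ(Π_{xt})}], where Δ(Π_{xt}) = 1 − μ(Π_{xt}). -/

import Mathlib

open MeasureTheory ProbabilityTheory Set Filter Asymptotics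
open scoped ENNReal NNReal RealInnerProductSpace Topology

noncomputable section

/-- Euclidean space `ℝ^d`. -/
abbrev Euc (d : ℕ) := EuclideanSpace ℝ (Fin d)

/-- The number of points of a finite point configuration `ξ` lying in the set `A`. -/
def nPts {d : ℕ} (ξ : Finset (Euc d)) (A : Set (Euc d)) : ℕ :=
  ((ξ : Set (Euc d)) ∩ A).ncard

/-- `η` is a Poisson point process on `ℝ^d` with (finite) intensity measure `ν`, defined on
the probability space `(Ω, P)`: for every Borel set `A` the number of points in `A` is
Poisson distributed with parameter `ν A`, and the counts on pairwise disjoint Borel sets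
are independent. -/
structure IsPoissonPP {d : ℕ} {Ω : Type*} [MeasurableSpace Ω] (P : Measure Ω)
    (ν : Measure (Euc d)) (η : Ω → Finset (Euc d)) : Prop where
  measurable_count : ∀ A : Set (Euc d), MeasurableSet A →
    Measurable (fun ω => nPts (η ω) A)
  poisson_count : ∀ A : Set (Euc d), MeasurableSet A →
    P.map (fun ω => nPts (η ω) A) = poissonMeasure (ν A).toNNReal
  indep_counts : ∀ {ι : Type} (A : ι → Set (Euc d)), (∀ i, MeasurableSet (A i)) →
    Pairwise (Function.onFun Disjoint A) →
    iIndepFun (fun i ω => nPts (η ω) (A i)) P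

/-- The convex hull `[ξ]` of a finite point configuration `ξ`. -/
def hull {d : ℕ} (ξ : Finset (Euc d)) : Set (Euc d) :=
  convexHull ℝ (ξ : Set (Euc d))

/-- The number `I` of points of `ξ` lying in the interior of the convex hull of `ξ`
(the "inner points"). -/
def innerCount {d : ℕ} (ξ : Finset (Euc d)) : ℕ :=
  nPts ξ (interior (hull ξ))

/-- The number `N` of points of `ξ` not lying in the interior of the convex hull of `ξ`
(the vertices of the convex hull). -/
def vertexCount {d : ℕ} (ξ : Finset (Euc d)) : ℕ :=
  nPts ξ (interior (hull ξ))ᶜ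

instance {d : ℕ} : MeasurableSpace (Finset (Euc d)) := ⊤

lemma nPts_eq_zero_iff {d : ℕ} (ξ : Finset (Euc d)) (A : Set (Euc d)) :
    nPts ξ A = 0 ↔ (ξ : Set (Euc d)) ∩ A = ∅ := by
  rw [nPts, Set.ncard_eq_zero (Set.toFinite _)]

lemma subset_iff_nPts {d : ℕ} (ξ : Finset (Euc d)) (C : Set (Euc d)) :
    (ξ : Set (Euc d)) ⊆ C ↔ nPts ξ Cᶜ = 0 := by
  rw [nPts_eq_zero_iff]
  constructor
  · intro h; ext p; simp only [Set.mem_inter_iff, Set.mem_compl_iff, Set.mem_empty_iff_false,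
      iff_false, not_and]
    exact fun hp => not_not_intro (h hp)
  · intro h p hp
    by_contra hpc
    exact absurd (Set.eq_empty_iff_forall_notMem.mp h p ⟨hp, hpc⟩) (fun H => H)

lemma hullc {d : ℕ} (ξ : Finset (Euc d)) : IsClosed (hull ξ) :=
  ((ξ : Set (Euc d)).toFinite.isCompact_convexHull ℝ).isClosed

variable {d : ℕ}

/-- countable family of closed halfspaces with dense parameters -/
def Hw (d : ℕ) : ℕ → (Euc d) × ℝ := TopologicalSpace.denseSeq ((Euc d) × ℝ)

def Hs (d : ℕ) (i : ℕ) : Set (Euc d) := {z | ⟪(Hw d i).1, z⟫ ≤ (Hw d i).2}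

lemma convex_Hs (i : ℕ) : Convex ℝ (Hs d i) :=
  convex_halfSpace_le (innerₛₗ ℝ ((Hw d i).1)).isLinear _

lemma closed_Hs (i : ℕ) : IsClosed (Hs d i) :=
  isClosed_le (Continuous.inner continuous_const continuous_id) continuous_const

lemma hull_subset_Hs {a : Finset (Euc d)} {i : ℕ} (h : (a : Set (Euc d)) ⊆ Hs d i) :
    hull a ⊆ Hs d i :=
  convexHull_min h (convex_Hs i)

lemma exists_sep {a : Finset (Euc d)} {z : Euc d} (hz : z ∉ hull a) :
    ∃ i, (a : Set (Euc d)) ⊆ Hs d i ∧ z ∉ Hs d i := by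
  obtain ⟨f, u, hfu, huz⟩ := geometric_hahn_banach_closed_point
    (convex_convexHull ℝ (a : Set (Euc d))) (hullc a) hz
  set v₀ := (InnerProductSpace.toDual ℝ (Euc d)).symm f with hv₀
  have hv : ∀ p, ⟪v₀, p⟫ = f p := fun p => InnerProductSpace.toDual_symm_apply
  set G : Set ((Euc d) × ℝ) :=
    {vc | (∀ p ∈ (a : Set (Euc d)), ⟪vc.1, p⟫ < vc.2) ∧ vc.2 < ⟪vc.1, z⟫} with hG
  have hGopen : IsOpen G := by
    have h1 : ∀ p : Euc d, IsOpen {vc : (Euc d) × ℝ | ⟪vc.1, p⟫ < vc.2} := fun p =>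
      isOpen_lt (Continuous.inner continuous_fst continuous_const) continuous_snd
    have h2 : IsOpen {vc : (Euc d) × ℝ | vc.2 < ⟪vc.1, z⟫} :=
      isOpen_lt continuous_snd (Continuous.inner continuous_fst continuous_const)
    have : G = (⋂ p ∈ (a : Set (Euc d)), {vc : (Euc d) × ℝ | ⟪vc.1, p⟫ < vc.2}) ∩
        {vc : (Euc d) × ℝ | vc.2 < ⟪vc.1, z⟫} := by
      ext vc; simp [hG, Set.mem_iInter]
    rw [this]
    exact ((a : Set (Euc d)).toFinite.isOpen_biInter (fun p _ => h1 p)).inter h2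
  have hGne : (v₀, u) ∈ G := by
    refine ⟨fun p hp => ?_, by simpa [hv] using huz⟩
    simpa [hv] using hfu p (subset_convexHull ℝ _ hp)
  obtain ⟨i, hi⟩ := (TopologicalSpace.denseRange_denseSeq ((Euc d) × ℝ)).exists_mem_open
    hGopen ⟨_, hGne⟩
  exact ⟨i, fun p hp => le_of_lt (hi.1 p hp), not_le.mpr hi.2⟩

lemma mem_hull_iff {a : Finset (Euc d)} {z : Euc d} :
    z ∈ hull a ↔ ∀ i, (a : Set (Euc d)) ⊆ Hs d i → z ∈ Hs d i := by
  constructor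
  · exact fun hz i hi => hull_subset_Hs hi hz
  · intro h
    by_contra hz
    obtain ⟨i, hi, hzi⟩ := exists_sep hz
    exact hzi (h i hi)

def ballC (d : ℕ) (i : ℕ) : Set (Euc d) := Metric.ball (Hw d i).1 (Hw d i).2
def cballC (d : ℕ) (i : ℕ) : Set (Euc d) := Metric.closedBall (Hw d i).1 (2*(Hw d i).2)

lemma ballC_subset_cballC (i : ℕ) : ballC d i ⊆ cballC d i := by
  intro z hz
  have h1 : dist z (Hw d i).1 < (Hw d i).2 := Metric.mem_ball.mp hz
  have h0 : 0 < (Hw d i).2 := lt_of_le_of_lt dist_nonneg h1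
  exact Metric.mem_closedBall.mpr (by linarith)

lemma interior_hull_eq (a : Finset (Euc d)) :
    interior (hull a) = ⋃ i, ⋃ (_ : cballC d i ⊆ hull a), ballC d i := by
  apply Set.Subset.antisymm
  · intro z hz
    obtain ⟨ε, hε, hball⟩ := Metric.mem_nhds_iff.mp (mem_interior_iff_mem_nhds.mp hz)
    set O : Set ((Euc d) × ℝ) :=
      {cr | dist cr.1 z < cr.2 ∧ dist cr.1 z + 2*cr.2 < ε} with hO
    have hOopen : IsOpen O := by
      apply IsOpen.inter
      · exact isOpen_lt (Continuous.dist continuous_fst continuous_const) continuous_snd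
      · exact isOpen_lt ((Continuous.dist continuous_fst continuous_const).add (continuous_const.mul continuous_snd)) continuous_const
    have hmem : (z, ε/4) ∈ O := by
      constructor <;> simp <;> linarith
    obtain ⟨i, hi⟩ := (TopologicalSpace.denseRange_denseSeq ((Euc d) × ℝ)).exists_mem_open
      hOopen ⟨_, hmem⟩
    have hcb : cballC d i ⊆ hull a := by
      intro w hw
      apply hball
      have h1 : dist w (Hw d i).1 ≤ 2*(Hw d i).2 := Metric.mem_closedBall.mp hw
      have h2 : dist (Hw d i).1 z < (Hw d i).2 := hi.1
      have h3 : dist (Hw d i).1 z + 2*(Hw d i).2 < ε := hi.2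
      have : dist w z ≤ dist w (Hw d i).1 + dist (Hw d i).1 z := dist_triangle _ _ _
      exact Metric.mem_ball.mpr (by linarith)
    refine Set.mem_iUnion.mpr ⟨i, Set.mem_iUnion.mpr ⟨hcb, ?_⟩⟩
    exact Metric.mem_ball'.mpr (hi.1 : dist (Hw d i).1 z < (Hw d i).2)
  · refine Set.iUnion_subset fun i => Set.iUnion_subset fun hcb => ?_
    exact interior_maximal ((ballC_subset_cballC i).trans hcb) Metric.isOpen_ball

lemma extreme_not_interior {E : Type*} [NormedAddCommGroup E] [NormedSpace ℝ E] [Nontrivial E]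
    {C : Set E} {p : E} (hp : p ∈ C.extremePoints ℝ) : p ∉ interior C := by
  intro hint
  obtain ⟨ε, hε, hball⟩ := Metric.mem_nhds_iff.mp (mem_interior_iff_mem_nhds.mp hint)
  obtain ⟨v, hv⟩ := exists_ne (0 : E)
  set u : E := (ε/(2*‖v‖)) • v with hu
  have hvn : 0 < ‖v‖ := norm_pos_iff.mpr hv
  have hun : ‖u‖ = ε/2 := by
    rw [hu, norm_smul, Real.norm_eq_abs, abs_of_pos (by positivity)]
    field_simp
  have hune : u ≠ 0 := by
    intro h; rw [h, norm_zero] at hun; linarith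
  have h1 : p - u ∈ C := hball (by simp [Metric.mem_ball, dist_self_sub_left, hun]; linarith)
  have h2 : p + u ∈ C := hball (by simp [Metric.mem_ball, dist_self_add_left, hun]; linarith)
  have hseg : p ∈ openSegment ℝ (p - u) (p + u) := by
    refine ⟨1/2, 1/2, by norm_num, by norm_num, by norm_num, ?_⟩
    module
  have h12 : p - u = p := hp.2 h1 h2 hseg
  exact hune (by simpa using sub_eq_self.mp h12)

lemma geom_upper {d : ℕ} (hd : 0 < d) (a b : Finset (Euc d))
    (hE : ∀ p ∈ (a : Set (Euc d)) ∪ (b : Set (Euc d)),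
      p ∉ interior (convexHull ℝ ((a : Set (Euc d)) ∪ (b : Set (Euc d)))) → p ∈ a) :
    (b : Set (Euc d)) ⊆ hull a := by
  haveI : Nonempty (Fin d) := ⟨⟨0, hd⟩⟩
  haveI : Nontrivial (Euc d) := inferInstance
  set U : Set (Euc d) := (a : Set (Euc d)) ∪ (b : Set (Euc d)) with hU
  set C : Set (Euc d) := convexHull ℝ U with hC
  have hUfin : U.Finite := (a.finite_toSet).union (b.finite_toSet)
  have hcomp : IsCompact C := hUfin.isCompact_convexHull ℝ
  have hKM : closure (convexHull ℝ (C.extremePoints ℝ)) = C :=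
    closure_convexHull_extremePoints hcomp (convex_convexHull ℝ U)
  have hext : C.extremePoints ℝ ⊆ (a : Set (Euc d)) := by
    intro p hp
    exact hE p (extremePoints_convexHull_subset hp) (extreme_not_interior hp)
  have hCa : C ⊆ hull a := by
    rw [← hKM]
    have h1 : convexHull ℝ (C.extremePoints ℝ) ⊆ hull a := convexHull_mono hext
    exact (closure_minimal h1 (hullc a))
  exact fun p hp => hCa (subset_convexHull ℝ U (Set.mem_union_right _ hp))

lemma geom_lower {d : ℕ} (a b : Finset (Euc d))
    (hb : (b : Set (Euc d)) ⊆ interior (hull a)) :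
    ∀ p ∈ (a : Set (Euc d)) ∪ (b : Set (Euc d)),
      p ∉ interior (convexHull ℝ ((a : Set (Euc d)) ∪ (b : Set (Euc d)))) → p ∈ a := by
  intro p hp hpi
  rcases hp with hpa | hpb
  · exact hpa
  · exfalso
    apply hpi
    have h1 : hull a ⊆ convexHull ℝ ((a : Set (Euc d)) ∪ (b : Set (Euc d))) :=
      convexHull_mono Set.subset_union_left
    exact interior_mono h1 (hb hpb)

lemma void_prob {d : ℕ} {Ω : Type*} [MeasurableSpace Ω] {P : Measure Ω}
    {ν : Measure (Euc d)} {η : Ω → Finset (Euc d)} (hη : IsPoissonPP P ν η)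
    {C : Set (Euc d)} (hC : MeasurableSet C) :
    P {ω | nPts (η ω) C = 0} = ENNReal.ofReal (Real.exp (-((ν C).toNNReal : ℝ))) := by
  have hm := hη.measurable_count C hC
  have h1 : {ω | nPts (η ω) C = 0} = (fun ω => nPts (η ω) C) ⁻¹' {0} := rfl
  rw [h1, ← Measure.map_apply hm (measurableSet_singleton 0), hη.poisson_count C hC,
    poissonMeasure_singleton]
  show (poissonPMF (ν C).toNNReal) 0 = _
  have : (poissonPMF (ν C).toNNReal) 0 = ENNReal.ofReal (poissonPMFReal (ν C).toNNReal 0) := rfl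
  rw [this]
  simp [poissonPMFReal]

lemma indep_apply {d : ℕ} {Ω : Type*} [MeasurableSpace Ω] {P : Measure Ω}
    {η₁ η₂ : Ω → Finset (Euc d)} (hind : IndepFun η₁ η₂ P)
    (S T : Set (Finset (Euc d))) :
    P (η₁ ⁻¹' S ∩ η₂ ⁻¹' T) = P (η₁ ⁻¹' S) * P (η₂ ⁻¹' T) :=
  hind.measure_inter_preimage_eq_mul S T (MeasurableSpace.measurableSet_top) (MeasurableSpace.measurableSet_top)

open Classical in
lemma core {d : ℕ} {Ω : Type*} [MeasurableSpace Ω] (P : Measure Ω) [IsProbabilityMeasure P]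
    (η₁ η₂ : Ω → Finset (Euc d)) (hind : IndepFun η₁ η₂ P)
    (ν : Measure (Euc d)) (hpp : IsPoissonPP P ν η₂)
    (n : ℕ) (S : ℕ → Set (Finset (Euc d)))
    (hS : ∀ j, MeasurableSet (η₁ ⁻¹' (S j)))
    (V : Finset ℕ → Set (Euc d)) (hV : ∀ J, MeasurableSet (V J)) :
    (P {ω | nPts (η₂ ω) (V ((Finset.range n).filter (fun j => η₁ ω ∈ S j))) = 0}).toReal
      = ∫ ω, Real.exp (-((ν (V ((Finset.range n).filter (fun j => η₁ ω ∈ S j)))).toNNReal : ℝ)) ∂P := by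
  set Jf : Ω → Finset ℕ := fun ω => (Finset.range n).filter (fun j => η₁ ω ∈ S j) with hJf
  set pat : Finset ℕ → Set Ω := fun J => {ω | Jf ω = J} with hpat
  have hJfrange : ∀ ω, Jf ω ∈ (Finset.range n).powerset := fun ω =>
    Finset.mem_powerset.mpr (Finset.filter_subset _ _)
  -- pattern sets are measurable
  have hpatmeas : ∀ J, MeasurableSet (pat J) := by
    intro J
    by_cases hJr : J ⊆ Finset.range n
    · have : pat J = ⋂ j ∈ Finset.range n,
          (if j ∈ J then η₁ ⁻¹' S j else (η₁ ⁻¹' S j)ᶜ) := by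
        ext ω
        simp only [hpat, Set.mem_setOf_eq, Set.mem_iInter]
        constructor
        · intro h j hj
          subst h
          by_cases hjJ : j ∈ Jf ω
          · simp only [hjJ, if_pos]
            exact (Finset.mem_filter.mp hjJ).2
          · simp only [hjJ, if_neg]
            intro hc
            exact hjJ (Finset.mem_filter.mpr ⟨hj, hc⟩)
        · intro h
          apply Finset.ext
          intro j
          constructor
          · intro hjf
            have hj := Finset.mem_filter.mp hjf
            have := h j hj.1
            by_contra hjJ
            rw [if_neg hjJ] at this
            exact this hj.2
          · intro hjJ
            have hjr := hJr hjJ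
            have := h j hjr
            rw [if_pos hjJ] at this
            exact Finset.mem_filter.mpr ⟨hjr, this⟩
      rw [this]
      exact MeasurableSet.iInter (fun j => MeasurableSet.iInter
        (fun _ => by split <;> [exact hS j; exact (hS j).compl]))
    · have : pat J = ∅ := by
        ext ω
        simp only [hpat, Set.mem_setOf_eq, Set.mem_empty_iff_false, iff_false]
        intro h
        exact hJr (h ▸ Finset.mem_powerset.mp (hJfrange ω))
      rw [this]
      exact MeasurableSet.empty
  -- pattern sets as preimages
  have hpatpre : ∀ J, pat J = η₁ ⁻¹' {a | (Finset.range n).filter (fun j => a ∈ S j) = J} :=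
    fun J => rfl
  set E : Set Ω := {ω | nPts (η₂ ω) (V (Jf ω)) = 0} with hE
  set c : Finset ℕ → ℝ := fun J => Real.exp (-((ν (V J)).toNNReal : ℝ)) with hc
  have hvoidmeas : ∀ J, MeasurableSet {ω | nPts (η₂ ω) (V J) = 0} := fun J =>
    (hpp.measurable_count (V J) (hV J)) (measurableSet_singleton 0)
  have hEpat : ∀ J, E ∩ pat J = pat J ∩ {ω | nPts (η₂ ω) (V J) = 0} := by
    intro J
    ext ω
    simp only [hE, hpat, Set.mem_inter_iff, Set.mem_setOf_eq]
    constructor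
    · rintro ⟨h1, h2⟩; exact ⟨h2, h2 ▸ h1⟩
    · rintro ⟨h1, h2⟩; exact ⟨h1 ▸ h2, h1⟩
  -- decompose P E as a sum over patterns
  have hEdecomp : E = ⋃ J ∈ (Finset.range n).powerset, E ∩ pat J := by
    ext ω
    simp only [Set.mem_iUnion, Set.mem_inter_iff]
    constructor
    · intro h
      exact ⟨Jf ω, hJfrange ω, h, rfl⟩
    · rintro ⟨J, hJ, h, _⟩
      exact h
  have hPE : P E = ∑ J ∈ (Finset.range n).powerset, P (E ∩ pat J) := by
    nth_rewrite 1 [hEdecomp]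
    apply measure_biUnion_finset
    · intro J hJ K hK hJK
      apply Set.disjoint_left.mpr
      rintro ω ⟨_, h1⟩ ⟨_, h2⟩
      exact hJK (h1 ▸ h2 ▸ rfl)
    · intro J hJ
      exact ((hvoidmeas J).inter (hpatmeas J)).congr (by rw [hEpat J, Set.inter_comm])
  have hterm : ∀ J, P (E ∩ pat J) = P (pat J) * ENNReal.ofReal (c J) := by
    intro J
    rw [hEpat J, hpatpre J]
    have : {ω | nPts (η₂ ω) (V J) = 0} = η₂ ⁻¹' {b | nPts b (V J) = 0} := rfl
    rw [this, indep_apply hind _ _, ← this, void_prob hpp (hV J)]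
  -- the integrand is a simple function
  have hintegrand : ∀ ω, Real.exp (-((ν (V (Jf ω))).toNNReal : ℝ))
      = ∑ J ∈ (Finset.range n).powerset, (pat J).indicator (fun _ => c J) ω := by
    intro ω
    rw [Finset.sum_eq_single (Jf ω)]
    · simp [hpat, Set.indicator_of_mem, hc]
    · intro J _ hJne
      apply Set.indicator_of_notMem
      simp only [hpat, Set.mem_setOf_eq]
      exact fun h => hJne (h ▸ rfl)
    · intro h
      exact absurd (hJfrange ω) h
  calc (P E).toReal = ∑ J ∈ (Finset.range n).powerset, (P (E ∩ pat J)).toReal := by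
        rw [hPE, ENNReal.toReal_sum (fun J _ => measure_ne_top P _)]
    _ = ∑ J ∈ (Finset.range n).powerset, (P (pat J)).toReal * c J := by
        apply Finset.sum_congr rfl
        intro J _
        rw [hterm J, ENNReal.toReal_mul, ENNReal.toReal_ofReal (Real.exp_nonneg _)]
    _ = ∫ ω, ∑ J ∈ (Finset.range n).powerset, (pat J).indicator (fun _ => c J) ω ∂P := by
        rw [integral_finset_sum _ (fun J _ => (integrable_const (c J)).indicator (hpatmeas J))]
        apply Finset.sum_congr rfl
        intro J _
        rw [integral_indicator_const _ (hpatmeas J), smul_eq_mul, mul_comm]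
        exact mul_comm _ _
    _ = ∫ ω, Real.exp (-((ν (V (Jf ω))).toNNReal : ℝ)) ∂P := by
        congr 1
        ext ω
        rw [hintegrand ω]

lemma nPts_biUnion_zero {d : ℕ} (b : Finset (Euc d)) (J : Finset ℕ) (B : ℕ → Set (Euc d)) :
    nPts b (⋃ j ∈ J, B j) = 0 ↔ ∀ j ∈ J, nPts b (B j) = 0 := by
  simp only [nPts_eq_zero_iff]
  rw [Set.inter_iUnion₂]
  simp only [Set.iUnion_eq_empty]

open Classical in
lemma pat_measurable {d : ℕ} {Ω : Type*} [MeasurableSpace Ω] (η₁ : Ω → Finset (Euc d))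
    (n : ℕ) (S : ℕ → Set (Finset (Euc d))) (hS : ∀ j, MeasurableSet (η₁ ⁻¹' (S j)))
    (J : Finset ℕ) :
    MeasurableSet {ω | (Finset.range n).filter (fun j => η₁ ω ∈ S j) = J} := by
  by_cases hJr : J ⊆ Finset.range n
  · have : {ω | (Finset.range n).filter (fun j => η₁ ω ∈ S j) = J} = ⋂ j ∈ Finset.range n,
        (if j ∈ J then η₁ ⁻¹' S j else (η₁ ⁻¹' S j)ᶜ) := by
      ext ω
      simp only [Set.mem_setOf_eq, Set.mem_iInter]
      constructor
      · intro h j hj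
        by_cases hjJ : j ∈ J
        · rw [if_pos hjJ]
          rw [← h] at hjJ
          exact (Finset.mem_filter.mp hjJ).2
        · rw [if_neg hjJ]
          intro hc
          exact hjJ (h ▸ Finset.mem_filter.mpr ⟨hj, hc⟩)
      · intro h
        apply Finset.ext
        intro j
        constructor
        · intro hjf
          have hj := Finset.mem_filter.mp hjf
          have := h j hj.1
          by_contra hjJ
          rw [if_neg hjJ] at this
          exact this hj.2
        · intro hjJ
          have hjr := hJr hjJ
          have := h j hjr
          rw [if_pos hjJ] at this
          exact Finset.mem_filter.mpr ⟨hjr, this⟩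
    rw [this]
    exact MeasurableSet.iInter (fun j => MeasurableSet.iInter
      (fun _ => by split <;> [exact hS j; exact (hS j).compl]))
  · have : {ω | (Finset.range n).filter (fun j => η₁ ω ∈ S j) = J} = ∅ := by
      ext ω
      simp only [Set.mem_setOf_eq, Set.mem_empty_iff_false, iff_false]
      intro h
      exact hJr (h ▸ Finset.filter_subset _ _)
    rw [this]
    exact MeasurableSet.empty

open Classical in
lemma meas_of_pattern {d : ℕ} {Ω : Type*} [MeasurableSpace Ω] (η₁ : Ω → Finset (Euc d))
    (n : ℕ) (S : ℕ → Set (Finset (Euc d))) (hS : ∀ j, MeasurableSet (η₁ ⁻¹' (S j)))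
    (F : Finset ℕ → ℝ) :
    Measurable (fun ω => F ((Finset.range n).filter (fun j => η₁ ω ∈ S j))) := by
  letI : MeasurableSpace (Finset ℕ) := ⊤
  have h1 : Measurable (fun ω => (Finset.range n).filter (fun j => η₁ ω ∈ S j)) :=
    measurable_to_countable' (fun J => pat_measurable η₁ n S hS J)
  exact measurable_from_top.comp h1

lemma d0_absurd {Ω : Type*} [MeasurableSpace Ω] {P : Measure Ω} [IsProbabilityMeasure P]
    {ν : Measure (Euc 0)} {η : Ω → Finset (Euc 0)} (hη : IsPoissonPP P ν η)
    (hν : (ν Set.univ).toNNReal ≠ 0) : False := by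
  haveI : Subsingleton (Euc 0) := ⟨fun a b => PiLp.ext fun i => i.elim0⟩
  have hle : ∀ ω, nPts (η ω) Set.univ ≤ 1 := fun ω =>
    (Set.ncard_le_one (Set.toFinite _)).mpr (fun a _ b _ => Subsingleton.elim a b)
  have h2 : P.map (fun ω => nPts (η ω) Set.univ) {2} = 0 := by
    rw [Measure.map_apply (hη.measurable_count _ MeasurableSet.univ) (measurableSet_singleton 2)]
    convert measure_empty
    · ext ω
      simp only [Set.mem_preimage, Set.mem_singleton_iff, Set.mem_empty_iff_false, iff_false]
      have := hle ω
      omega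
    · infer_instance
  rw [hη.poisson_count _ MeasurableSet.univ] at h2
  rw [poissonMeasure_singleton] at h2
  have h3 : (poissonPMF (ν Set.univ).toNNReal) 2
      = ENNReal.ofReal (poissonPMFReal (ν Set.univ).toNNReal 2) := rfl
  change ENNReal.ofReal (poissonPMFReal (ν Set.univ).toNNReal 2) = 0 at h2
  have h4 : 0 < poissonPMFReal (ν Set.univ).toNNReal 2 :=
    poissonPMFReal_pos (pos_iff_ne_zero.mpr hν)
  rw [ENNReal.ofReal_eq_zero] at h2
  linarith


/-- Splitting step in the proof of Theorem 4 (Beermann–Reitzner): if `η_{xt}` and `η̄_{yt}`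
are independent Poisson point processes with intensity measures `xtμ` and `ytμ`,
`x + y = 1`, then the probability that all vertices of the convex hull of the superposition
`η_{xt} + η̄_{yt}` belong to `η_{xt}` equals `E[e^{-yt Δ(Π_{xt})}]`, where
`Δ(Π_{xt}) = 1 - μ(Π_{xt})`. -/
theorem prob_vertices_from_first_process
    {d : ℕ} {Ω : Type*} [MeasurableSpace Ω] (P : Measure Ω) [IsProbabilityMeasure P]
    (μ : Measure (Euc d)) [IsProbabilityMeasure μ] (hac : μ ≪ volume)
    (t : ℝ) (ht : 0 < t) (x y : ℝ) (hx : 0 ≤ x) (hy : 0 ≤ y) (hxy : x + y = 1)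
    (η₁ η₂ : Ω → Finset (Euc d))
    (hη₁ : IsPoissonPP P (ENNReal.ofReal (x * t) • μ) η₁)
    (hη₂ : IsPoissonPP P (ENNReal.ofReal (y * t) • μ) η₂)
    (hind : IndepFun η₁ η₂ P) :
    (P {ω | ∀ p ∈ (η₁ ω : Set (Euc d)) ∪ (η₂ ω : Set (Euc d)),
        p ∉ interior (convexHull ℝ ((η₁ ω : Set (Euc d)) ∪ (η₂ ω : Set (Euc d)))) →
        p ∈ η₁ ω}).toReal
      = ∫ ω, Real.exp (-(y * t) * (1 - (μ (hull (η₁ ω))).toReal)) ∂P := by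
  classical
  rcases Nat.eq_zero_or_pos d with hd0 | hd
  · -- degenerate dimension: the hypotheses are contradictory
    exfalso
    subst hd0
    have hr : ∀ r : ℝ, 0 < r → ((ENNReal.ofReal r • μ) Set.univ).toNNReal ≠ 0 := by
      intro r hrpos
      rw [Measure.smul_apply, smul_eq_mul, measure_univ, mul_one]
      simp only [ne_eq, ENNReal.toNNReal_eq_zero_iff, ENNReal.ofReal_eq_zero,
        ENNReal.ofReal_ne_top, or_false]
      linarith
    by_cases hx0 : x = 0
    · have hyt : 0 < y * t := by nlinarith
      exact d0_absurd hη₂ (hr _ hyt)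
    · have hxt : 0 < x * t := by
        have : 0 < x := lt_of_le_of_ne hx (Ne.symm hx0)
        positivity
      exact d0_absurd hη₁ (hr _ hxt)
  -- main case
  have hyt : 0 ≤ y * t := mul_nonneg hy ht.le
  set νy : Measure (Euc d) := ENNReal.ofReal (y * t) • μ with hνy
  have hconv : ∀ C : Set (Euc d), ((νy C).toNNReal : ℝ) = (y * t) * (μ C).toReal := by
    intro C
    calc ((νy C).toNNReal : ℝ) = (νy C).toReal := rfl
      _ = (ENNReal.ofReal (y * t) * μ C).toReal := by rw [hνy, Measure.smul_apply, smul_eq_mul]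
      _ = (y * t) * (μ C).toReal := by rw [ENNReal.toReal_mul, ENNReal.toReal_ofReal hyt]
  have hHscBorel : ∀ j, MeasurableSet ((Hs d j)ᶜ) := fun j => (closed_Hs j).measurableSet.compl
  set g : Ω → ℝ := fun ω => Real.exp (-(y * t) * (1 - (μ (hull (η₁ ω))).toReal)) with hg
  have hμhull_comp : ∀ a : Finset (Euc d), (μ ((hull a)ᶜ)).toReal = 1 - (μ (hull a)).toReal := by
    intro a
    rw [measure_compl (hullc a).measurableSet (measure_ne_top μ _), measure_univ,
      ENNReal.toReal_sub_of_le prob_le_one ENNReal.one_ne_top, ENNReal.toReal_one]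
  have hint_eq : ∀ a : Finset (Euc d), μ (interior (hull a)) = μ (hull a) := by
    intro a
    refine le_antisymm (measure_mono interior_subset) ?_
    have hfr : μ (frontier (hull a)) = 0 :=
      hac ((convex_convexHull ℝ _).addHaar_frontier volume)
    have hsub : hull a ⊆ interior (hull a) ∪ frontier (hull a) := by
      intro z hz
      by_cases hzi : z ∈ interior (hull a)
      · exact Or.inl hzi
      · exact Or.inr ⟨subset_closure hz, hzi⟩
    calc μ (hull a) ≤ μ (interior (hull a) ∪ frontier (hull a)) := measure_mono hsub
      _ ≤ μ (interior (hull a)) + μ (frontier (hull a)) := measure_union_le _ _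
      _ = μ (interior (hull a)) := by rw [hfr, add_zero]
  have hμint_comp : ∀ a : Finset (Euc d),
      (μ ((interior (hull a))ᶜ)).toReal = 1 - (μ (hull a)).toReal := by
    intro a
    rw [measure_compl isOpen_interior.measurableSet (measure_ne_top μ _), measure_univ, hint_eq a,
      ENNReal.toReal_sub_of_le prob_le_one ENNReal.one_ne_top, ENNReal.toReal_one]
  have hexp_le_one : ∀ m : ℝ, 0 ≤ m → Real.exp (-(y * t) * m) ≤ 1 := by
    intro m hm
    rw [← Real.exp_zero]
    apply Real.exp_le_exp.mpr
    nlinarith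
  -- ===================== UPPER BOUND FAMILY =====================
  set SU : ℕ → Set (Finset (Euc d)) := fun j => {a | (a : Set (Euc d)) ⊆ Hs d j} with hSU
  have hSUmeas : ∀ j, MeasurableSet (η₁ ⁻¹' SU j) := by
    intro j
    have : η₁ ⁻¹' SU j = {ω | nPts (η₁ ω) ((Hs d j)ᶜ) = 0} := by
      ext ω
      simp only [Set.mem_preimage, hSU, Set.mem_setOf_eq, subset_iff_nPts]
    rw [this]
    exact (hη₁.measurable_count _ (hHscBorel j)) (measurableSet_singleton 0)
  set VU : Finset ℕ → Set (Euc d) := fun J => ⋃ j ∈ J, (Hs d j)ᶜ with hVU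
  have hVUmeas : ∀ J, MeasurableSet (VU J) := fun J =>
    MeasurableSet.iUnion fun j => MeasurableSet.iUnion fun _ => hHscBorel j
  set JU : ℕ → Ω → Finset ℕ :=
    fun n ω => (Finset.range n).filter (fun j => η₁ ω ∈ SU j) with hJU
  set EU : ℕ → Set Ω := fun n => {ω | nPts (η₂ ω) (VU (JU n ω)) = 0} with hEU
  have hEUiff : ∀ n ω, ω ∈ EU n ↔
      ∀ j ∈ Finset.range n, (η₁ ω : Set (Euc d)) ⊆ Hs d j → nPts (η₂ ω) ((Hs d j)ᶜ) = 0 := by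
    intro n ω
    simp only [hEU, Set.mem_setOf_eq, hVU]
    rw [nPts_biUnion_zero]
    constructor
    · intro h j hj hsub
      exact h j (Finset.mem_filter.mpr ⟨hj, hsub⟩)
    · intro h j hj
      obtain ⟨hj1, hj2⟩ := Finset.mem_filter.mp hj
      exact h j hj1 hj2
  have hvoidmeas : ∀ B : Set (Euc d), MeasurableSet B →
      MeasurableSet {ω | nPts (η₂ ω) B = 0} := fun B hB =>
    (hη₂.measurable_count B hB) (measurableSet_singleton 0)
  have hEUmeas : ∀ n, MeasurableSet (EU n) := by
    intro n
    have : EU n = ⋂ j ∈ Finset.range n,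
        ((η₁ ⁻¹' SU j)ᶜ ∪ {ω | nPts (η₂ ω) ((Hs d j)ᶜ) = 0}) := by
      ext ω
      rw [hEUiff n ω]
      simp only [Set.mem_iInter, Set.mem_union, Set.mem_compl_iff, Set.mem_preimage, hSU,
        Set.mem_setOf_eq]
      constructor
      · intro h j hj
        by_cases hsub : (η₁ ω : Set (Euc d)) ⊆ Hs d j
        · exact Or.inr (h j hj hsub)
        · exact Or.inl hsub
      · intro h j hj hsub
        rcases h j hj with h1 | h1
        · exact absurd hsub h1
        · exact h1
    rw [this]
    exact MeasurableSet.iInter fun j => MeasurableSet.iInter fun _ =>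
      ((hSUmeas j).compl.union (hvoidmeas _ (hHscBorel j)))
  have hEUanti : Antitone EU := by
    intro m n hmn ω hω
    rw [hEUiff] at hω ⊢
    intro j hj hsub
    exact hω j (Finset.mem_range.mpr (lt_of_lt_of_le (Finset.mem_range.mp hj) hmn)) hsub
  set preSU : Set Ω :=
    {ω | ∀ j, (η₁ ω : Set (Euc d)) ⊆ Hs d j → nPts (η₂ ω) ((Hs d j)ᶜ) = 0} with hpreSU
  have hiInterU : ⋂ n, EU n = preSU := by
    ext ω
    simp only [Set.mem_iInter, hpreSU, Set.mem_setOf_eq]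
    constructor
    · intro h j hsub
      exact (hEUiff (j + 1) ω).mp (h (j + 1)) j (Finset.mem_range.mpr (Nat.lt_succ_self j)) hsub
    · intro h n
      rw [hEUiff]
      intro j _ hsub
      exact h j hsub
  have hlimU : Tendsto (fun n => (P (EU n)).toReal) atTop (𝓝 ((P preSU).toReal)) := by
    have h1 : Tendsto (fun n => P (EU n)) atTop (𝓝 (P preSU)) := by
      rw [← hiInterU]
      exact tendsto_measure_iInter_atTop (fun n => (hEUmeas n).nullMeasurableSet) hEUanti
        ⟨0, measure_ne_top P _⟩
    exact (ENNReal.tendsto_toReal (measure_ne_top P _)).comp h1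
  have hcoreU : ∀ n, (P (EU n)).toReal
      = ∫ ω, Real.exp (-(y * t) * (μ (VU (JU n ω))).toReal) ∂P := by
    intro n
    have h := core P η₁ η₂ hind νy hη₂ n SU hSUmeas VU hVUmeas
    calc (P (EU n)).toReal
        = ∫ ω, Real.exp (-((νy (VU (JU n ω))).toNNReal : ℝ)) ∂P := h
      _ = ∫ ω, Real.exp (-(y * t) * (μ (VU (JU n ω))).toReal) ∂P := by
          congr 1
          ext ω
          rw [hconv, neg_mul]
  have hgU : ∀ ω, Tendsto (fun n => Real.exp (-(y * t) * (μ (VU (JU n ω))).toReal)) atTop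
      (𝓝 (g ω)) := by
    intro ω
    have hmono : Monotone (fun n => VU (JU n ω)) := by
      intro m n hmn z hz
      simp only [hVU, Set.mem_iUnion] at hz ⊢
      obtain ⟨j, hjJ, hzj⟩ := hz
      exact ⟨j, Finset.filter_subset_filter _ (Finset.range_subset_range.mpr hmn) hjJ, hzj⟩
    have hUnion : ⋃ n, VU (JU n ω) = (hull (η₁ ω))ᶜ := by
      ext z
      simp only [Set.mem_iUnion, Set.mem_compl_iff, hVU, hJU]
      constructor
      · rintro ⟨n, j, hjJ, hzj⟩
        have hsub : (η₁ ω : Set (Euc d)) ⊆ Hs d j := (Finset.mem_filter.mp hjJ).2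
        intro hzh
        exact hzj (hull_subset_Hs hsub hzh)
      · intro hz
        obtain ⟨j, hsub, hzj⟩ := exists_sep hz
        exact ⟨j + 1, j, Finset.mem_filter.mpr ⟨Finset.mem_range.mpr (Nat.lt_succ_self j), hsub⟩,
          hzj⟩
    have h1 : Tendsto (fun n => μ (VU (JU n ω))) atTop (𝓝 (μ ((hull (η₁ ω))ᶜ))) := by
      have := tendsto_measure_iUnion_atTop (μ := μ) hmono
      rwa [hUnion] at this
    have h2 : Tendsto (fun n => (μ (VU (JU n ω))).toReal) atTop
        (𝓝 ((μ ((hull (η₁ ω))ᶜ)).toReal)) :=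
      (ENNReal.tendsto_toReal (measure_ne_top μ _)).comp h1
    have h3 : Tendsto (fun n => Real.exp (-(y * t) * (μ (VU (JU n ω))).toReal)) atTop
        (𝓝 (Real.exp (-(y * t) * (μ ((hull (η₁ ω))ᶜ)).toReal))) :=
      (Real.continuous_exp.tendsto _).comp (h2.const_mul _)
    rw [hμhull_comp] at h3
    exact h3
  have hdctU : Tendsto (fun n => ∫ ω, Real.exp (-(y * t) * (μ (VU (JU n ω))).toReal) ∂P) atTop
      (𝓝 (∫ ω, g ω ∂P)) := by
    apply tendsto_integral_of_dominated_convergence (fun _ => (1 : ℝ))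
    · intro n
      exact (meas_of_pattern η₁ n SU hSUmeas
        (fun J => Real.exp (-(y * t) * (μ (VU J)).toReal))).aestronglyMeasurable
    · exact integrable_const 1
    · intro n
      filter_upwards with ω
      rw [Real.norm_eq_abs, abs_of_pos (Real.exp_pos _)]
      exact hexp_le_one _ ENNReal.toReal_nonneg
    · exact Eventually.of_forall hgU
  have hUfinal : (P preSU).toReal = ∫ ω, g ω ∂P := by
    apply tendsto_nhds_unique ?_ hdctU
    simpa only [hcoreU] using hlimU
  -- ===================== LOWER BOUND FAMILY =====================
  set SL : ℕ → Set (Finset (Euc d)) := fun i => {a | cballC d i ⊆ hull a} with hSL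
  have hSLmeas : ∀ i, MeasurableSet (η₁ ⁻¹' SL i) := by
    intro i
    have heq : η₁ ⁻¹' SL i =
        ⋂ j, {ω | ¬ cballC d i ⊆ Hs d j → ¬ ((η₁ ω : Set (Euc d)) ⊆ Hs d j)} := by
      ext ω
      simp only [Set.mem_preimage, hSL, Set.mem_setOf_eq, Set.mem_iInter]
      constructor
      · intro h j hcb hsub
        exact hcb (fun z hz => hull_subset_Hs hsub (h hz))
      · intro h z hz
        rw [mem_hull_iff]
        intro j hsub
        by_contra hzH
        exact h j (fun hcb => hzH (hcb hz)) hsub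
    rw [heq]
    apply MeasurableSet.iInter
    intro j
    by_cases hcb : cballC d i ⊆ Hs d j
    · have : {ω | ¬ cballC d i ⊆ Hs d j → ¬ ((η₁ ω : Set (Euc d)) ⊆ Hs d j)} = Set.univ := by
        ext ω; simp [hcb]
      rw [this]; exact MeasurableSet.univ
    · have : {ω | ¬ cballC d i ⊆ Hs d j → ¬ ((η₁ ω : Set (Euc d)) ⊆ Hs d j)}
          = {ω | nPts (η₁ ω) ((Hs d j)ᶜ) = 0}ᶜ := by
        ext ω
        simp only [Set.mem_setOf_eq, Set.mem_compl_iff, ← subset_iff_nPts]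
        tauto
      rw [this]
      exact ((hη₁.measurable_count _ (hHscBorel j)) (measurableSet_singleton 0)).compl
  set VL : Finset ℕ → Set (Euc d) := fun J => ⋂ i ∈ J, (ballC d i)ᶜ with hVL
  have hVLmeas : ∀ J, MeasurableSet (VL J) := fun J =>
    MeasurableSet.iInter fun i => MeasurableSet.iInter fun _ =>
      Metric.isOpen_ball.measurableSet.compl
  set JL : ℕ → Ω → Finset ℕ :=
    fun n ω => (Finset.range n).filter (fun i => η₁ ω ∈ SL i) with hJL
  set EL : ℕ → Set Ω := fun n => {ω | nPts (η₂ ω) (VL (JL n ω)) = 0} with hEL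
  have hVLcompl : ∀ J : Finset ℕ, VL J = (⋃ i ∈ J, ballC d i)ᶜ := by
    intro J
    simp only [hVL, Set.compl_iUnion]
  have hELiff : ∀ n ω, ω ∈ EL n ↔ (η₂ ω : Set (Euc d)) ⊆ ⋃ i ∈ JL n ω, ballC d i := by
    intro n ω
    simp only [hEL, Set.mem_setOf_eq]
    rw [subset_iff_nPts, ← hVLcompl]
  have hELmono : Monotone EL := by
    intro m n hmn ω hω
    rw [hELiff] at hω ⊢
    refine hω.trans ?_
    intro z hz
    simp only [Set.mem_iUnion] at hz ⊢
    obtain ⟨i, hiJ, hzi⟩ := hz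
    exact ⟨i, Finset.filter_subset_filter _ (Finset.range_subset_range.mpr hmn) hiJ, hzi⟩
  set preSL : Set Ω := {ω | (η₂ ω : Set (Euc d)) ⊆ interior (hull (η₁ ω))} with hpreSL
  have hiUnionL : ⋃ n, EL n = preSL := by
    ext ω
    simp only [Set.mem_iUnion, hpreSL, Set.mem_setOf_eq]
    constructor
    · rintro ⟨n, hn⟩
      rw [hELiff] at hn
      refine hn.trans ?_
      rw [interior_hull_eq]
      intro z hz
      simp only [Set.mem_iUnion] at hz ⊢
      obtain ⟨i, hiJ, hzi⟩ := hz
      exact ⟨i, (Finset.mem_filter.mp hiJ).2, hzi⟩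
    · intro h
      set W : ℕ → Set (Euc d) := fun i => if cballC d i ⊆ hull (η₁ ω) then ballC d i else ∅
        with hW
      have hWopen : ∀ i, IsOpen (W i) := by
        intro i
        simp only [hW]
        split
        · exact Metric.isOpen_ball
        · exact isOpen_empty
      have hcov : (η₂ ω : Set (Euc d)) ⊆ ⋃ i, W i := by
        intro p hp
        have h2 := h hp
        rw [interior_hull_eq] at h2
        simp only [Set.mem_iUnion] at h2 ⊢
        obtain ⟨i, hcb, hball⟩ := h2
        exact ⟨i, by simp only [hW]; rw [if_pos hcb]; exact hball⟩
      obtain ⟨F, hF⟩ := ((η₂ ω : Set (Euc d)).toFinite.isCompact).elim_finite_subcover W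
        hWopen hcov
      refine ⟨(F.sup id) + 1, ?_⟩
      rw [hELiff]
      refine hF.trans ?_
      intro z hz
      simp only [Set.mem_iUnion] at hz ⊢
      obtain ⟨i, hiF, hzi⟩ := hz
      by_cases hcb : cballC d i ⊆ hull (η₁ ω)
      · simp only [hW] at hzi
        rw [if_pos hcb] at hzi
        exact ⟨i, Finset.mem_filter.mpr ⟨Finset.mem_range.mpr
          (Nat.lt_succ_of_le (Finset.le_sup (f := id) hiF)), hcb⟩, hzi⟩
      · simp only [hW] at hzi
        rw [if_neg hcb] at hzi
        exact absurd hzi (Set.notMem_empty z)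
  have hlimL : Tendsto (fun n => (P (EL n)).toReal) atTop (𝓝 ((P preSL).toReal)) := by
    have h1 : Tendsto (fun n => P (EL n)) atTop (𝓝 (P preSL)) := by
      have := tendsto_measure_iUnion_atTop (μ := P) hELmono
      rwa [hiUnionL] at this
    exact (ENNReal.tendsto_toReal (measure_ne_top P _)).comp h1
  have hcoreL : ∀ n, (P (EL n)).toReal
      = ∫ ω, Real.exp (-(y * t) * (μ (VL (JL n ω))).toReal) ∂P := by
    intro n
    have h := core P η₁ η₂ hind νy hη₂ n SL hSLmeas VL hVLmeas
    calc (P (EL n)).toReal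
        = ∫ ω, Real.exp (-((νy (VL (JL n ω))).toNNReal : ℝ)) ∂P := h
      _ = ∫ ω, Real.exp (-(y * t) * (μ (VL (JL n ω))).toReal) ∂P := by
          congr 1
          ext ω
          rw [hconv, neg_mul]
  have hgL : ∀ ω, Tendsto (fun n => Real.exp (-(y * t) * (μ (VL (JL n ω))).toReal)) atTop
      (𝓝 (g ω)) := by
    intro ω
    have hanti : Antitone (fun n => VL (JL n ω)) := by
      intro m n hmn z hz
      simp only [hVL, Set.mem_iInter] at hz ⊢
      intro i hiJ
      exact hz i (Finset.filter_subset_filter _ (Finset.range_subset_range.mpr hmn) hiJ)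
    have hInter : ⋂ n, VL (JL n ω) = (interior (hull (η₁ ω)))ᶜ := by
      ext z
      simp only [Set.mem_iInter, hVL, hJL, Set.mem_compl_iff]
      rw [interior_hull_eq]
      simp only [Set.mem_iUnion, not_exists]
      constructor
      · intro h i hcb
        have := h (i + 1) i (Finset.mem_filter.mpr
          ⟨Finset.mem_range.mpr (Nat.lt_succ_self i), hcb⟩)
        exact fun hball => this hball
      · intro h n i hiJ
        exact h i (Finset.mem_filter.mp hiJ).2
    have h1 : Tendsto (fun n => μ (VL (JL n ω))) atTop
        (𝓝 (μ ((interior (hull (η₁ ω)))ᶜ))) := by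
      have := tendsto_measure_iInter_atTop (μ := μ)
        (fun n => (hVLmeas (JL n ω)).nullMeasurableSet) hanti ⟨0, measure_ne_top μ _⟩
      rwa [hInter] at this
    have h2 : Tendsto (fun n => (μ (VL (JL n ω))).toReal) atTop
        (𝓝 ((μ ((interior (hull (η₁ ω)))ᶜ)).toReal)) :=
      (ENNReal.tendsto_toReal (measure_ne_top μ _)).comp h1
    have h3 : Tendsto (fun n => Real.exp (-(y * t) * (μ (VL (JL n ω))).toReal)) atTop
        (𝓝 (Real.exp (-(y * t) * (μ ((interior (hull (η₁ ω)))ᶜ)).toReal))) :=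
      (Real.continuous_exp.tendsto _).comp (h2.const_mul _)
    rw [hμint_comp] at h3
    exact h3
  have hdctL : Tendsto (fun n => ∫ ω, Real.exp (-(y * t) * (μ (VL (JL n ω))).toReal) ∂P) atTop
      (𝓝 (∫ ω, g ω ∂P)) := by
    apply tendsto_integral_of_dominated_convergence (fun _ => (1 : ℝ))
    · intro n
      exact (meas_of_pattern η₁ n SL hSLmeas
        (fun J => Real.exp (-(y * t) * (μ (VL J)).toReal))).aestronglyMeasurable
    · exact integrable_const 1
    · intro n
      filter_upwards with ω
      rw [Real.norm_eq_abs, abs_of_pos (Real.exp_pos _)]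
      exact hexp_le_one _ ENNReal.toReal_nonneg
    · exact Eventually.of_forall hgL
  have hLfinal : (P preSL).toReal = ∫ ω, g ω ∂P := by
    apply tendsto_nhds_unique ?_ hdctL
    simpa only [hcoreL] using hlimL
  -- ===================== SANDWICH =====================
  set Ev : Set Ω := {ω | ∀ p ∈ (η₁ ω : Set (Euc d)) ∪ (η₂ ω : Set (Euc d)),
      p ∉ interior (convexHull ℝ ((η₁ ω : Set (Euc d)) ∪ (η₂ ω : Set (Euc d)))) →
      p ∈ η₁ ω} with hEv
  have hsub1 : preSL ⊆ Ev := by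
    intro ω hω
    exact geom_lower (η₁ ω) (η₂ ω) hω
  have hsub2 : Ev ⊆ preSU := by
    intro ω hω
    intro j hsubj
    have hb : (η₂ ω : Set (Euc d)) ⊆ hull (η₁ ω) := geom_upper hd (η₁ ω) (η₂ ω) hω
    have : (η₂ ω : Set (Euc d)) ⊆ Hs d j := hb.trans (hull_subset_Hs hsubj)
    exact (subset_iff_nPts _ _).mp this
  have h1 : (P preSL).toReal ≤ (P Ev).toReal :=
    ENNReal.toReal_mono (measure_ne_top P _) (measure_mono hsub1)
  have h2 : (P Ev).toReal ≤ (P preSU).toReal :=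
    ENNReal.toReal_mono (measure_ne_top P _) (measure_mono hsub2)
  have : (P Ev).toReal = ∫ ω, g ω ∂P := by
    rw [hLfinal] at h1
    rw [hUfinal] at h2
    linarith
  exact this
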